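/- For any 2×2 complex matrices A and B, the determinant of the 4×4 matrix M := fromBlocks A B (−conj B) (conj A) is a nonnegative real number, and it is strictly positive if and only if M is invertible. -/

import Mathlib

open Matrix

/-- Entrywise complex conjugation of a complex matrix. -/
noncomputable def mconj {n m : Type*} (M : Matrix n m ℂ) : Matrix n m ℂ :=
  M.map (starRingEnd ℂ)

set_option maxHeartbeats 1000000 in
private lemma det_fin_four_expl (e00 e01 e02 e03 e10 e11 e12 e13 e20 e21 e22 e23
    e30 e31 e32 e33 : ℂ) :
    (!![e00,e01,e02,e03; e10,e11,e12,e13; e20,e21,e22,e23; e30,e31,e32,e33] :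
      Matrix (Fin 4) (Fin 4) ℂ).det =
    e00*e11*e22*e33 - e00*e11*e23*e32 - e00*e12*e21*e33 + e00*e12*e23*e31
    + e00*e13*e21*e32 - e00*e13*e22*e31 - e01*e10*e22*e33 + e01*e10*e23*e32
    + e01*e12*e20*e33 - e01*e12*e23*e30 - e01*e13*e20*e32 + e01*e13*e22*e30
    + e02*e10*e21*e33 - e02*e10*e23*e31 - e02*e11*e20*e33 + e02*e11*e23*e30
    + e02*e13*e20*e31 - e02*e13*e21*e30 - e03*e10*e21*e32 + e03*e10*e22*e31
    + e03*e11*e20*e32 - e03*e11*e22*e30 - e03*e12*e20*e31 + e03*e12*e21*e30 := by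
  rw [Matrix.det_succ_row_zero]
  simp [Fin.sum_univ_succ, Matrix.det_fin_three, Fin.succAbove]
  ring

set_option maxHeartbeats 1000000 in
/-- For any 2×2 complex matrices `A`, `B`, the determinant of the quaternionic-type
matrix `M = [[A, B],[−conj B, conj A]]` is a nonnegative real number, and it is
strictly positive iff `M` is invertible. -/
theorem quaternionicType_det_nonneg (A B : Matrix (Fin 2) (Fin 2) ℂ) :
    ((Matrix.fromBlocks A B (-(mconj B)) (mconj A)).det.im = 0 ∧
      0 ≤ (Matrix.fromBlocks A B (-(mconj B)) (mconj A)).det.re) ∧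
    (0 < (Matrix.fromBlocks A B (-(mconj B)) (mconj A)).det.re ↔
      IsUnit (Matrix.fromBlocks A B (-(mconj B)) (mconj A))) := by
  set M := Matrix.fromBlocks A B (-(mconj B)) (mconj A) with hM
  let K := starRingEnd ℂ
  set a := A 0 0 with ha; set b := A 0 1 with hb
  set c := A 1 0 with hc; set d := A 1 1 with hd
  set p := B 0 0 with hp; set q := B 0 1 with hq
  set r := B 1 0 with hr; set s := B 1 1 with hs
  -- the quaternion-product auxiliary quantities
  set x1 := a*d - p*(K s) with hx1
  set x2 := a*s + p*(K d) with hx2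
  set y1 := b*c - q*(K r) with hy1
  set y2 := b*r + q*(K c) with hy2
  set w1 := ((K a)*b + p*(K q)) * ((K d)*c + s*(K r))
      - ((K a)*q - p*(K b)) * (d*(K r) - (K s)*c) with hw1
  set w2 := ((K a)*b + p*(K q)) * ((K d)*r - s*(K c))
      + ((K a)*q - p*(K b)) * (d*(K c) + (K s)*r) with hw2
  -- determinant as explicit 4×4
  have hsub : (M.submatrix finSumFinEquiv.symm finSumFinEquiv.symm) =
      !![a,b,p,q; c,d,r,s; -(K p),-(K q),K a,K b; -(K r),-(K s),K c,K d] := by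
    ext i j
    fin_cases i <;> fin_cases j <;>
      simp [hM, mconj, Matrix.fromBlocks, Matrix.submatrix_apply, finSumFinEquiv,
        Fin.divNat, Fin.modNat, ha, hb, hc, hd, hp, hq, hr, hs, K] <;> rfl
  have hdet0 : M.det = (M.submatrix finSumFinEquiv.symm finSumFinEquiv.symm).det :=
    (Matrix.det_submatrix_equiv_self _ _).symm
  -- key identity I1
  have I1 : M.det = x1*(K x1) + x2*(K x2) + y1*(K y1) + y2*(K y2) - (w1 + K w1) := by
    rw [hdet0, hsub, det_fin_four_expl, hx1, hx2, hy1, hy2, hw1]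
    simp only [_root_.map_mul, _root_.map_add, _root_.map_sub, Complex.conj_conj, K]
    ring
  -- key identity I2 (norm multiplicativity of quaternions)
  have I2 : w1*(K w1) + w2*(K w2)
      = (x1*(K x1) + x2*(K x2)) * (y1*(K y1) + y2*(K y2)) := by
    rw [hx1, hx2, hy1, hy2, hw1, hw2]
    simp only [_root_.map_mul, _root_.map_add, _root_.map_sub, Complex.conj_conj, K]
    ring
  -- pass to real quantities
  have hx1c : x1 * (K x1) = (Complex.normSq x1 : ℝ) := Complex.mul_conj x1
  have hx2c : x2 * (K x2) = (Complex.normSq x2 : ℝ) := Complex.mul_conj x2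
  have hy1c : y1 * (K y1) = (Complex.normSq y1 : ℝ) := Complex.mul_conj y1
  have hy2c : y2 * (K y2) = (Complex.normSq y2 : ℝ) := Complex.mul_conj y2
  have hw1c : w1 + (K w1) = ((2 * w1.re : ℝ) : ℂ) := by
    rw [Complex.add_conj]
  set X : ℝ := Complex.normSq x1 + Complex.normSq x2 with hX
  set Y : ℝ := Complex.normSq y1 + Complex.normSq y2 with hY
  have hdetR : M.det = ((X + Y - 2 * w1.re : ℝ) : ℂ) := by
    rw [I1, hx1c, hx2c, hy1c, hy2c, hw1c, hX, hY]; push_cast; ring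
  have hXY : Complex.normSq w1 + Complex.normSq w2 = X * Y := by
    have h := I2
    rw [Complex.mul_conj, Complex.mul_conj, hx1c, hx2c, hy1c, hy2c] at h
    rw [hX, hY]
    exact_mod_cast h
  have hw1sq : w1.re ^ 2 ≤ X * Y := by
    have h1 : w1.re ^ 2 ≤ Complex.normSq w1 := by
      rw [Complex.normSq_apply]; nlinarith [sq_nonneg w1.im]
    have h2 : (0:ℝ) ≤ Complex.normSq w2 := Complex.normSq_nonneg w2
    linarith [hXY]
  have hXnn : 0 ≤ X := add_nonneg (Complex.normSq_nonneg _) (Complex.normSq_nonneg _)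
  have hYnn : 0 ≤ Y := add_nonneg (Complex.normSq_nonneg _) (Complex.normSq_nonneg _)
  have him : M.det.im = 0 := by rw [hdetR]; simp
  have hre : M.det.re = X + Y - 2 * w1.re := by rw [hdetR]; simp
  have hnn : 0 ≤ M.det.re := by
    rw [hre]
    nlinarith [sq_nonneg (X - Y), sq_nonneg (X + Y - 2 * w1.re), hw1sq, hXnn, hYnn]
  refine ⟨⟨him, hnn⟩, ?_⟩
  have hunit : IsUnit M ↔ M.det ≠ 0 := by
    rw [Matrix.isUnit_iff_isUnit_det, isUnit_iff_ne_zero]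
  rw [hunit]
  constructor
  · intro h hzero
    rw [hzero] at h
    simp at h
  · intro h
    rcases lt_or_eq_of_le hnn with h' | h'
    · exact h'
    · exfalso; apply h
      apply Complex.ext
      · exact h'.symm
      · exact him
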